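/- Let P ⊆ ℝ² be finite with |P| ≥ 2 and let T be a Euclidean minimum spanning tree of P. Then every edge {p,q} of T is an edge of the Pie Delaunay graph PDG(P): there exist l ∈ {0,…,5} and an l-pie, empty with respect to P, with both p and q on its boundary. -/

import Mathlib

/- Common geometric setup: the Euclidean plane, wedges `W_l`, bisectors `b_l`,
equilateral triangles `∆_l` and `l`-tri's, circular sectors `σ_l` and `l`-pies,
and the proximity graphs (Semi-Yao, nearest-neighbor, Equilateral/Pie Delaunay,
Yao) together with Euclidean minimum spanning trees. -/

open Real EuclideanGeometry
open scoped RealInnerProductSpace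

noncomputable section

abbrev E : Type := EuclideanSpace ℝ (Fin 2)

/-- The point `(a, b)` in the Euclidean plane. -/
def pt (a b : ℝ) : E := (WithLp.equiv 2 (Fin 2 → ℝ)).symm ![a, b]

/-- The unit vector at polar angle `θ`. -/
def dir (θ : ℝ) : E := pt (Real.cos θ) (Real.sin θ)

/-- The lower boundary angle `(2l-1)π/6` of the `l`-th wedge. -/
def lo (l : Fin 6) : ℝ := (2 * ((l : ℕ) : ℝ) - 1) * π / 6

/-- The upper boundary angle `(2l+1)π/6` of the `l`-th wedge. -/
def hi (l : Fin 6) : ℝ := (2 * ((l : ℕ) : ℝ) + 1) * π / 6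

/-- The half-open wedge `W_l`: all nonzero points whose polar angle (mod `2π`)
lies in `[(2l-1)π/6, (2l+1)π/6)`. -/
def wedge (l : Fin 6) : Set E :=
  {x | x ≠ 0 ∧ ∃ θ : ℝ, lo l ≤ θ ∧ θ < hi l ∧ x = ‖x‖ • dir θ}

/-- `W_l(p)`, the translate of `W_l` with apex `p`. -/
def wedgeAt (l : Fin 6) (p : E) : Set E := {x | x - p ∈ wedge l}

/-- The unit bisector vector `b_l = (cos(lπ/3), sin(lπ/3))` of `W_l`. -/
def bvec (l : Fin 6) : E := dir (((l : ℕ) : ℝ) * π / 3)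

/-- `V_l(p) = P ∩ W_l(p)`. -/
def Vl (P : Finset E) (l : Fin 6) (p : E) : Set E := {x | x ∈ P ∧ x ∈ wedgeAt l p}

/-- The closed equilateral triangle `∆_l` with vertices `0`, `dir ((2l-1)π/6)`,
`dir ((2l+1)π/6)`. -/
def tri (l : Fin 6) : Set E := convexHull ℝ {0, dir (lo l), dir (hi l)}

/-- The vertex set of `∆_l`. -/
def triVerts (l : Fin 6) : Set E := {0, dir (lo l), dir (hi l)}

/-- The `l`-tri `c + lam • ∆_l`. -/
def lTri (l : Fin 6) (c : E) (lam : ℝ) : Set E := (fun x => c + lam • x) '' tri l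

/-- The closed circular sector (piece of pie) `σ_l` of the unit disk. -/
def sector (l : Fin 6) : Set E :=
  {x | ‖x‖ ≤ 1 ∧ (x = 0 ∨ ∃ θ : ℝ, lo l ≤ θ ∧ θ ≤ hi l ∧ x = ‖x‖ • dir θ)}

/-- The `l`-pie `c + lam • σ_l`. -/
def lPie (l : Fin 6) (c : E) (lam : ℝ) : Set E := (fun x => c + lam • x) '' sector l

/-- Directed Semi-Yao graph edge from `a` to `b`: `a ∈ V_l(b)` for some `l` and `a`
has the minimum `b_l`-coordinate among the points of `V_l(b)`. -/
def SYG (P : Finset E) (a b : E) : Prop :=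
  b ∈ P ∧ ∃ l : Fin 6, a ∈ Vl P l b ∧
    ∀ r ∈ Vl P l b, ⟪a - b, bvec l⟫ ≤ ⟪r - b, bvec l⟫

/-- Undirected Semi-Yao graph edge. -/
def SYGu (P : Finset E) (p q : E) : Prop := SYG P p q ∨ SYG P q p

/-- Directed nearest-neighbor graph edge from `a` to `b`: `b ∈ P \ {a}` and
`‖a - b‖ = min_{r ∈ P \ {a}} ‖a - r‖`. -/
def NNG (P : Finset E) (a b : E) : Prop :=
  a ∈ P ∧ b ∈ P ∧ b ≠ a ∧ ∀ r ∈ P, r ≠ a → ‖a - b‖ ≤ ‖a - r‖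

/-- Edge of the Equilateral Delaunay triangulation `EDT_l(P)`: there is an `l`-tri,
empty with respect to `P`, with both endpoints on its boundary. -/
def EDT (P : Finset E) (l : Fin 6) (p q : E) : Prop :=
  p ∈ P ∧ q ∈ P ∧ p ≠ q ∧ ∃ c : E, ∃ lam : ℝ, 0 < lam ∧
    p ∈ frontier (lTri l c lam) ∧ q ∈ frontier (lTri l c lam) ∧
    ∀ r ∈ P, r ∉ interior (lTri l c lam)

/-- Edge of the Equilateral Delaunay graph `EDG(P) = EDT_0(P) ∪ EDT_1(P)`. -/
def EDG (P : Finset E) (p q : E) : Prop := EDT P 0 p q ∨ EDT P 1 p q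

/-- Directed Yao-graph edge from `p` to `q`: `q ∈ V_l(p)` for some `l` and
`‖p - q‖ = min_{r ∈ V_l(p)} ‖p - r‖`. -/
def YG (P : Finset E) (p q : E) : Prop :=
  p ∈ P ∧ ∃ l : Fin 6, q ∈ Vl P l p ∧ ∀ r ∈ Vl P l p, ‖p - q‖ ≤ ‖p - r‖

/-- Edge of the Pie Delaunay triangulation `PDT_l(P)`: there is an `l`-pie, empty
with respect to `P`, with both endpoints on its boundary. -/
def PDT (P : Finset E) (l : Fin 6) (p q : E) : Prop :=
  p ∈ P ∧ q ∈ P ∧ p ≠ q ∧ ∃ c : E, ∃ lam : ℝ, 0 < lam ∧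
    p ∈ frontier (lPie l c lam) ∧ q ∈ frontier (lPie l c lam) ∧
    ∀ r ∈ P, r ∉ interior (lPie l c lam)

/-- Edge of the Pie Delaunay graph `PDG(P) = PDT_0(P) ∪ ⋯ ∪ PDT_5(P)`. -/
def PDG (P : Finset E) (p q : E) : Prop := ∃ l : Fin 6, PDT P l p q

/-- Total Euclidean edge weight of a graph on the points of `P`. -/
def edgeWeight (P : Finset E) (G : SimpleGraph {x // x ∈ P}) : ℝ :=
  ∑ e ∈ G.edgeSet.toFinite.toFinset,
    Sym2.lift ⟨fun (a b : {x // x ∈ P}) => ‖(a : E) - (b : E)‖,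
      fun _ _ => norm_sub_rev _ _⟩ e

/-- `T` is a Euclidean minimum spanning tree of `P`: a spanning tree (connected and
acyclic graph on the vertex set `P`) of minimum total Euclidean edge weight. -/
def IsEMST (P : Finset E) (T : SimpleGraph {x // x ∈ P}) : Prop :=
  T.IsTree ∧ ∀ G : SimpleGraph {x // x ∈ P}, G.IsTree → edgeWeight P T ≤ edgeWeight P G


section Graph

open SimpleGraph

/-- Invariant: any walk in `T` either survives edge deletion, or crosses the
deleted edge `s(p,q)`. -/
lemma walk_invariant {V : Type*} (T : SimpleGraph V) (p q : V) {v u : V} (w : T.Walk v u) :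
    (T \ SimpleGraph.fromEdgeSet {s(p,q)}).Reachable v u ∨
    ((T \ SimpleGraph.fromEdgeSet {s(p,q)}).Reachable v p ∧
      (T \ SimpleGraph.fromEdgeSet {s(p,q)}).Reachable u q) ∨
    ((T \ SimpleGraph.fromEdgeSet {s(p,q)}).Reachable v q ∧
      (T \ SimpleGraph.fromEdgeSet {s(p,q)}).Reachable u p) := by
  set T' := T \ SimpleGraph.fromEdgeSet {s(p,q)} with hT'
  induction w with
  | nil => exact Or.inl (Reachable.refl _)
  | @cons x y z h w ih =>
    by_cases hxy : s(x, y) = s(p, q)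
    · rw [Sym2.eq_iff] at hxy
      rcases hxy with ⟨rfl, rfl⟩ | ⟨rfl, rfl⟩
      · rcases ih with h1 | ⟨h1, h2⟩ | ⟨h1, h2⟩
        · exact Or.inr (Or.inl ⟨Reachable.refl _, h1.symm⟩)
        · exact Or.inr (Or.inl ⟨Reachable.refl _, h2⟩)
        · exact Or.inl h2.symm
      · rcases ih with h1 | ⟨h1, h2⟩ | ⟨h1, h2⟩
        · exact Or.inr (Or.inr ⟨Reachable.refl _, h1.symm⟩)
        · exact Or.inl h2.symm
        · exact Or.inr (Or.inr ⟨Reachable.refl _, h2⟩)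
    · have hadj : T'.Adj x y := by
        rw [hT', SimpleGraph.sdiff_adj, SimpleGraph.fromEdgeSet_adj]
        refine ⟨h, ?_⟩
        simp only [Set.mem_singleton_iff, not_and]
        intro hc
        exact absurd hc hxy
      rcases ih with h1 | ⟨h1, h2⟩ | ⟨h1, h2⟩
      · exact Or.inl (hadj.reachable.trans h1)
      · exact Or.inr (Or.inl ⟨hadj.reachable.trans h1, h2⟩)
      · exact Or.inr (Or.inr ⟨hadj.reachable.trans h1, h2⟩)

/-- After deleting one edge of a connected graph, every vertex can still reach
one of the two endpoints. -/
lemma reach_p_or_q {V : Type*} (T : SimpleGraph V) (hc : T.Preconnected) (p q v : V) :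
    (T \ SimpleGraph.fromEdgeSet {s(p,q)}).Reachable v p ∨
    (T \ SimpleGraph.fromEdgeSet {s(p,q)}).Reachable v q := by
  obtain ⟨w⟩ := hc v p
  rcases walk_invariant T p q w with h1 | ⟨h1, h2⟩ | ⟨h1, h2⟩
  · exact Or.inl h1
  · exact Or.inl h1
  · exact Or.inr h1

lemma exchange_key (P : Finset E) (T : SimpleGraph {x // x ∈ P}) (hT : IsEMST P T)
    (p q r : {x // x ∈ P}) (hadj : T.Adj p q) (hrp : r ≠ p) (hrq : r ≠ q)
    (hreach : (T \ SimpleGraph.fromEdgeSet {s(p,q)}).Reachable r p)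
    (hw : ‖(r : E) - (q : E)‖ < ‖(p : E) - (q : E)‖) : False := by
  classical
  set T' := T \ SimpleGraph.fromEdgeSet {s(p,q)} with hT'
  have hac : T.IsAcyclic := hT.1.IsAcyclic
  have hbridge : ¬ T'.Reachable p q :=
    isBridge_iff.mp (isAcyclic_iff_forall_adj_isBridge.mp hac hadj)
  have hall : ∀ v : {x // x ∈ P}, T'.Reachable v p ∨ T'.Reachable v q := fun v =>
    reach_p_or_q T hT.1.isConnected.preconnected p q v
  have hfe : s((r : {x // x ∈ P}), q) ≠ s(p, q) := by
    intro h
    rw [Sym2.eq_iff] at h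
    rcases h with ⟨h, -⟩ | ⟨h, -⟩
    · exact hrp h
    · exact hrq h
  have hfT : s((r : {x // x ∈ P}), q) ∉ T.edgeSet := by
    intro hmem
    have hadjrq : T'.Adj r q := by
      rw [hT', SimpleGraph.sdiff_adj, SimpleGraph.fromEdgeSet_adj]
      refine ⟨hmem, ?_⟩
      simp only [Set.mem_singleton_iff, not_and]
      intro hc; exact absurd hc hfe
    exact hbridge ((hreach.symm).trans hadjrq.reachable)
  set T'' := T' ⊔ SimpleGraph.fromEdgeSet {s((r : {x // x ∈ P}), q)} with hT''
  have hle : T' ≤ T'' := le_sup_left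
  have hadjrq'' : T''.Adj r q := by
    rw [hT'', SimpleGraph.sup_adj, SimpleGraph.fromEdgeSet_adj]
    exact Or.inr ⟨rfl, hrq⟩
  have hreach'' : T''.Reachable p q :=
    ((hreach.mono hle).symm.trans (hadjrq''.reachable))
  have hconn : T''.Connected := by
    rw [SimpleGraph.connected_iff]
    refine ⟨fun u v => ?_, ⟨p⟩⟩
    rcases hall u with hu | hu <;> rcases hall v with hv | hv
    · exact (hu.mono hle).trans (hv.mono hle).symm
    · exact ((hu.mono hle).trans hreach'').trans (hv.mono hle).symm
    · exact ((hu.mono hle).trans hreach''.symm).trans (hv.mono hle).symm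
    · exact (hu.mono hle).trans (hv.mono hle).symm
  have hacyc : T''.IsAcyclic := by
    intro u c hc
    by_cases he : s((r : {x // x ∈ P}), q) ∈ c.edges
    · have hkey : T''.Adj r q ∧
          (T'' \ SimpleGraph.fromEdgeSet {s((r : {x // x ∈ P}), q)}).Reachable r q :=
        SimpleGraph.adj_and_reachable_delete_edges_iff_exists_cycle.mpr ⟨u, c, hc, he⟩
      have hsub : (T'' \ SimpleGraph.fromEdgeSet {s((r : {x // x ∈ P}), q)}) ≤ T' := by
        intro a b hab
        rw [SimpleGraph.sdiff_adj] at hab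
        obtain ⟨hab1, hab2⟩ := hab
        rw [hT'', SimpleGraph.sup_adj] at hab1
        rcases hab1 with h1 | h1
        · exact h1
        · exact absurd h1 hab2
      have : T'.Reachable r q := hkey.2.mono hsub
      exact hbridge (hreach.symm.trans this)
    · have hsub : ∀ e ∈ c.edges, e ∈ T.edgeSet := by
        intro e hec
        have hmem := c.edges_subset_edgeSet hec
        rw [hT''] at hmem
        simp only [SimpleGraph.edgeSet_sup, hT', SimpleGraph.edgeSet_sdiff,
          SimpleGraph.edgeSet_fromEdgeSet, Set.mem_union, Set.mem_diff] at hmem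
        rcases hmem with h1 | h1
        · exact h1.1
        · exfalso; apply he; rw [← h1.1]; exact hec
      exact hac (c.transfer T hsub) (hc.transfer hsub)
  have htree : T''.IsTree := ⟨hconn, hacyc⟩
  have hediff : edgeWeight P T'' < edgeWeight P T := by
    have hpqd : p ≠ q := hadj.ne
    have hset : T''.edgeSet = insert s((r : {x // x ∈ P}),q) (T.edgeSet \ {s(p,q)}) := by
      rw [hT'', hT']
      simp only [SimpleGraph.edgeSet_sup, SimpleGraph.edgeSet_sdiff,
        SimpleGraph.edgeSet_fromEdgeSet]
      ext e
      simp only [Set.mem_union, Set.mem_diff, Set.mem_singleton_iff, Set.mem_insert_iff,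
        Set.mem_setOf_eq]
      constructor
      · rintro (⟨hm1, hm2⟩ | ⟨hm1, hm2⟩)
        · refine Or.inr ⟨hm1, ?_⟩
          intro he
          exact hm2 ⟨he, by simp [he, Sym2.mk_isDiag_iff, hpqd]⟩
        · exact Or.inl hm1
      · rintro (rfl | ⟨hm1, hm2⟩)
        · exact Or.inr ⟨rfl, by simp [Sym2.mk_isDiag_iff, hrq]⟩
        · exact Or.inl ⟨hm1, fun hc => hm2 hc.1⟩
    have hfin : T''.edgeSet.toFinite.toFinset
        = insert s((r : {x // x ∈ P}),q) ((T.edgeSet.toFinite.toFinset).erase s(p,q)) := by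
      ext e
      simp only [Set.Finite.mem_toFinset, Finset.mem_insert, Finset.mem_erase, hset,
        Set.mem_insert_iff, Set.mem_diff, Set.mem_singleton_iff]
      tauto
    have hepq : s(p,q) ∈ T.edgeSet.toFinite.toFinset := by
      rw [Set.Finite.mem_toFinset]; exact hadj
    have hnotin : s((r : {x // x ∈ P}),q) ∉ (T.edgeSet.toFinite.toFinset).erase s(p,q) := by
      rw [Finset.mem_erase, Set.Finite.mem_toFinset]
      rintro ⟨-, hc⟩; exact hfT hc
    rw [edgeWeight, hfin, Finset.sum_insert hnotin, Finset.sum_erase_eq_sub hepq]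
    have hl1 : Sym2.lift ⟨fun (a b : {x // x ∈ P}) => ‖(a : E) - (b : E)‖,
      fun _ _ => norm_sub_rev _ _⟩ s((r : {x // x ∈ P}),q) = ‖(r : E) - (q : E)‖ := rfl
    have hl2 : Sym2.lift ⟨fun (a b : {x // x ∈ P}) => ‖(a : E) - (b : E)‖,
      fun _ _ => norm_sub_rev _ _⟩ s(p,q) = ‖(p : E) - (q : E)‖ := rfl
    rw [hl1, hl2, edgeWeight]
    linarith
  exact absurd (hT.2 T'' htree) (not_le.mpr hediff)

/-- The lens (lune) of an EMST edge is empty. -/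
lemma emst_lens (P : Finset E) (T : SimpleGraph {x // x ∈ P}) (hT : IsEMST P T)
    (p q r : {x // x ∈ P}) (hadj : T.Adj p q)
    (h1 : ‖(p : E) - (r : E)‖ < ‖(p : E) - (q : E)‖)
    (h2 : ‖(q : E) - (r : E)‖ < ‖(p : E) - (q : E)‖) : False := by
  classical
  have hrp : r ≠ p := by
    rintro rfl
    rw [norm_sub_rev] at h2
    exact lt_irrefl _ h2
  have hrq : r ≠ q := by
    rintro rfl
    exact lt_irrefl _ h1
  rcases reach_p_or_q T hT.1.isConnected.preconnected p q r with hr | hr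
  · exact exchange_key P T hT p q r hadj hrp hrq hr (by rwa [norm_sub_rev] at h2)
  · have hr' : (T \ SimpleGraph.fromEdgeSet {s(q,p)}).Reachable r q := by
      rwa [Sym2.eq_swap (a := q)]
    refine exchange_key P T hT q p r hadj.symm hrq hrp hr' ?_
    rw [norm_sub_rev] at h1
    rwa [norm_sub_rev (q : E)]

end Graph
section Geo0

lemma pt_zero' (a b : ℝ) : pt a b 0 = a := rfl
lemma pt_one' (a b : ℝ) : pt a b 1 = b := rfl

lemma norm_pt (a b : ℝ) : ‖pt a b‖ = Real.sqrt (a^2 + b^2) := by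
  simp [pt, EuclideanSpace.norm_eq, Fin.sum_univ_two, Real.norm_eq_abs, sq_abs]

lemma norm_dir (θ : ℝ) : ‖dir θ‖ = 1 := by
  rw [dir, norm_pt, Real.cos_sq_add_sin_sq, Real.sqrt_one]

lemma inner_dir_dir (α β : ℝ) : ⟪dir α, dir β⟫ = Real.cos (α - β) := by
  simp only [dir, pt, PiLp.inner_apply, RCLike.inner_apply, conj_trivial, Fin.sum_univ_two]
  simp [Real.cos_sub, mul_comm]

lemma dir_ne_zero (θ : ℝ) : dir θ ≠ 0 := by
  intro h
  have := norm_dir θ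
  rw [h, norm_zero] at this
  norm_num at this

lemma ext_E {x y : E} (h0 : x 0 = y 0) (h1 : x 1 = y 1) : x = y := by
  ext i
  fin_cases i <;> assumption

end Geo0
section Geo1

lemma find_sector (θ : ℝ) (h1 : -(π/6) ≤ θ) (h2 : θ < 11*π/6) :
    ∃ l : Fin 6, lo l ≤ θ ∧ θ < hi l := by
  have hπ := Real.pi_pos
  by_cases c0 : θ < π/6
  · exact ⟨(⟨0, by norm_num⟩ : Fin 6), by norm_num [lo, hi]; linarith, by norm_num [lo, hi]; linarith⟩
  by_cases c1 : θ < 3*π/6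
  · exact ⟨(⟨1, by norm_num⟩ : Fin 6), by norm_num [lo, hi]; linarith, by norm_num [lo, hi]; linarith⟩
  by_cases c2 : θ < 5*π/6
  · exact ⟨(⟨2, by norm_num⟩ : Fin 6), by norm_num [lo, hi]; linarith, by norm_num [lo, hi]; linarith⟩
  by_cases c3 : θ < 7*π/6
  · exact ⟨(⟨3, by norm_num⟩ : Fin 6), by norm_num [lo, hi]; linarith, by norm_num [lo, hi]; linarith⟩
  by_cases c4 : θ < 9*π/6
  · exact ⟨(⟨4, by norm_num⟩ : Fin 6), by norm_num [lo, hi]; linarith, by norm_num [lo, hi]; linarith⟩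
  · exact ⟨(⟨5, by norm_num⟩ : Fin 6), by norm_num [lo, hi]; linarith, by norm_num [lo, hi]; linarith⟩

lemma exists_angle (v : E) (hv : v ≠ 0) :
    ∃ (l : Fin 6) (θ : ℝ), lo l ≤ θ ∧ θ < hi l ∧ v = ‖v‖ • dir θ := by
  have hπ := Real.pi_pos
  set z : ℂ := ⟨v 0, v 1⟩ with hz
  have hz0 : z ≠ 0 := by
    intro h
    apply hv
    rw [Complex.ext_iff] at h
    exact ext_E h.1 h.2
  have habs : ‖z‖ = ‖v‖ := by
    rw [Complex.norm_def, Complex.normSq_apply, EuclideanSpace.norm_eq]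
    simp [Fin.sum_univ_two, Real.norm_eq_abs, sq_abs, hz]
    ring_nf
  have hvnorm : (0:ℝ) < ‖v‖ := norm_pos_iff.mpr hv
  have hcos : Real.cos (Complex.arg z) = v 0 / ‖v‖ := by
    rw [Complex.cos_arg hz0, habs]
  have hsin : Real.sin (Complex.arg z) = v 1 / ‖v‖ := by
    rw [Complex.sin_arg, habs]
  have hkey : ∀ θ : ℝ, Real.cos θ = Real.cos (Complex.arg z) →
      Real.sin θ = Real.sin (Complex.arg z) → v = ‖v‖ • dir θ := by
    intro θ hc hs
    apply ext_E
    · show v 0 = ‖v‖ * (dir θ 0)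
      rw [dir, pt_zero', hc, hcos]
      field_simp
    · show v 1 = ‖v‖ * (dir θ 1)
      rw [dir, pt_one', hs, hsin]
      field_simp
  have harg1 := Complex.neg_pi_lt_arg z
  have harg2 := Complex.arg_le_pi z
  by_cases hlow : -(π/6) ≤ Complex.arg z
  · obtain ⟨l, hl1, hl2⟩ := find_sector (Complex.arg z) hlow (by linarith)
    exact ⟨l, Complex.arg z, hl1, hl2, hkey _ rfl rfl⟩
  · push_neg at hlow
    obtain ⟨l, hl1, hl2⟩ := find_sector (Complex.arg z + 2*π) (by linarith) (by linarith)
    exact ⟨l, Complex.arg z + 2*π, hl1, hl2,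
      hkey _ (Real.cos_add_two_pi _) (Real.sin_add_two_pi _)⟩

end Geo1
section Geo2

lemma mem_lPie_iff {l : Fin 6} {c : E} {lam : ℝ} (hlam : 0 < lam) (x : E) :
    x ∈ lPie l c lam ↔ ‖x - c‖ ≤ lam ∧
      (x = c ∨ ∃ θ : ℝ, lo l ≤ θ ∧ θ ≤ hi l ∧ x - c = ‖x - c‖ • dir θ) := by
  constructor
  · rintro ⟨s, ⟨hs1, hs2⟩, rfl⟩
    have hxc : c + lam • s - c = lam • s := by abel
    have hnorm : ‖c + lam • s - c‖ = lam * ‖s‖ := by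
      rw [hxc, norm_smul, Real.norm_eq_abs, abs_of_pos hlam]
    constructor
    · rw [hnorm]
      calc lam * ‖s‖ ≤ lam * 1 := by
            exact mul_le_mul_of_nonneg_left hs1 hlam.le
        _ = lam := mul_one lam
    · rcases hs2 with rfl | ⟨θ, hθ1, hθ2, hs⟩
      · left; simp
      · right
        refine ⟨θ, hθ1, hθ2, ?_⟩
        rw [hxc, hs]
        have hn2 : ‖lam • ‖s‖ • dir θ‖ = lam * ‖s‖ := by
          rw [norm_smul, norm_smul, norm_dir, Real.norm_eq_abs, Real.norm_eq_abs,
            abs_of_pos hlam, abs_of_nonneg (norm_nonneg _), mul_one]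
        rw [hn2, smul_smul]
  · rintro ⟨hle, hcase⟩
    refine ⟨lam⁻¹ • (x - c), ⟨?_, ?_⟩, ?_⟩
    · rw [norm_smul, Real.norm_eq_abs, abs_of_pos (inv_pos.mpr hlam)]
      rw [inv_mul_le_iff₀ hlam, mul_one]
      exact hle
    · rcases hcase with rfl | ⟨θ, hθ1, hθ2, hx⟩
      · left; simp
      · right
        refine ⟨θ, hθ1, hθ2, ?_⟩
        rw [hx]
        have hn2 : ‖lam⁻¹ • ‖x - c‖ • dir θ‖ = lam⁻¹ * ‖x - c‖ := by
          rw [norm_smul, norm_smul, norm_dir, Real.norm_eq_abs, Real.norm_eq_abs,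
            abs_of_pos (inv_pos.mpr hlam), abs_of_nonneg (norm_nonneg _), mul_one]
        rw [hn2, smul_smul]
    · simp only
      rw [smul_inv_smul₀ (ne_of_gt hlam)]
      abel

lemma not_interior_of_dist_eq {l : Fin 6} {c : E} {lam : ℝ} (hlam : 0 < lam) {x : E}
    (h : ‖x - c‖ = lam) : x ∉ interior (lPie l c lam) := by
  intro hx
  rw [mem_interior_iff_mem_nhds, Metric.mem_nhds_iff] at hx
  obtain ⟨ε, hε, hball⟩ := hx
  set t : ℝ := ε / (2 * lam) with ht
  have ht0 : 0 < t := div_pos hε (by linarith)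
  set y : E := x + t • (x - c) with hy
  have hyx : ‖y - x‖ = t * lam := by
    rw [hy]
    have : x + t • (x - c) - x = t • (x - c) := by abel
    rw [this, norm_smul, Real.norm_eq_abs, abs_of_pos ht0, h]
  have hymem : y ∈ Metric.ball x ε := by
    rw [Metric.mem_ball, dist_eq_norm, hyx, ht]
    rw [div_mul_eq_mul_div, mul_comm 2 lam, ← div_div, mul_div_assoc, div_self (ne_of_gt hlam)]
    linarith
  have hyc : ‖y - c‖ = (1 + t) * lam := by
    have h1 : y - c = (1 + t) • (x - c) := by
      rw [hy, add_smul, one_smul]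
      abel
    rw [h1, norm_smul, Real.norm_eq_abs, abs_of_pos (by linarith), h]
  have := (mem_lPie_iff hlam y).mp (hball hymem)
  rw [hyc] at this
  nlinarith [this.1]

lemma apex_not_interior {l : Fin 6} {c : E} {lam : ℝ} (hlam : 0 < lam) :
    c ∉ interior (lPie l c lam) := by
  intro hx
  rw [mem_interior_iff_mem_nhds, Metric.mem_nhds_iff] at hx
  obtain ⟨ε, hε, hball⟩ := hx
  set t : ℝ := min (ε/2) lam with ht
  have ht0 : 0 < t := lt_min (by linarith) hlam
  set y : E := c - t • bvec l with hy
  have hyc : y - c = (-t) • bvec l := by rw [hy, neg_smul]; abel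
  have hycn : ‖y - c‖ = t := by
    rw [hyc, norm_smul, Real.norm_eq_abs, abs_neg, abs_of_pos ht0, bvec, norm_dir, mul_one]
  have hymem : y ∈ Metric.ball c ε := by
    rw [Metric.mem_ball, dist_eq_norm, hycn]
    calc t ≤ ε/2 := min_le_left _ _
      _ < ε := by linarith
  have hne : y ≠ c := by
    intro hcontra
    rw [hcontra, sub_self] at hycn
    rw [norm_zero] at hycn
    exact (ne_of_gt ht0) hycn.symm
  obtain ⟨-, hcase⟩ := (mem_lPie_iff hlam y).mp (hball hymem)
  rcases hcase with h | ⟨θ, hθ1, hθ2, hx⟩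
  · exact hne h
  · -- dir θ = - bvec l, contradiction
    rw [hycn, hyc] at hx
    -- (-t) • bvec l = t • dir θ
    have hbd : dir θ = -(bvec l) := by
      have h2 : t • dir θ + t • bvec l = 0 := by
        rw [← hx]; rw [neg_smul]; abel
      have h3 : t • (dir θ + bvec l) = 0 := by rw [smul_add, h2]
      have h4 : dir θ + bvec l = 0 := by
        rcases smul_eq_zero.mp h3 with h | h
        · exact absurd h (ne_of_gt ht0)
        · exact h
      linear_combination (norm := module) h4
    set φ : ℝ := ((l : ℕ) : ℝ) * π / 3 with hφ
    have hc : Real.cos θ = -Real.cos φ := by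
      have := congrArg (fun z : E => z 0) hbd
      simpa [dir, bvec, pt] using this
    have hs : Real.sin θ = -Real.sin φ := by
      have := congrArg (fun z : E => z 1) hbd
      simpa [dir, bvec, pt] using this
    have hcosm1 : Real.cos (θ - φ) = -1 := by
      rw [Real.cos_sub, hc, hs]
      have := Real.sin_sq_add_cos_sq φ
      nlinarith
    have hπ := Real.pi_pos
    have hbound1 : lo l = φ - π/6 := by rw [lo, hφ]; ring
    have hbound2 : hi l = φ + π/6 := by rw [hi, hφ]; ring
    have hpos : 0 < Real.cos (θ - φ) := by
      apply Real.cos_pos_of_mem_Ioo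
      constructor
      · rw [hbound1] at hθ1; linarith
      · rw [hbound2] at hθ2; linarith
    rw [hcosm1] at hpos
    linarith

end Geo2
section Main

theorem emst_edge_mem_pieDelaunayGraph' (P : Finset E) (hP : 2 ≤ P.card)
    (T : SimpleGraph {x // x ∈ P}) (hT : IsEMST P T)
    (p q : {x // x ∈ P}) (hadj : T.Adj p q) : PDG P (p : E) (q : E) := by
  classical
  have hpq : (p : E) ≠ (q : E) := fun h => hadj.ne (Subtype.ext h)
  set v : E := (q : E) - (p : E) with hv
  have hvne : v ≠ 0 := sub_ne_zero.mpr (Ne.symm hpq)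
  obtain ⟨l, θ, hθ1, hθ2, hdir⟩ := exists_angle v hvne
  set a : ℝ := ‖v‖ with ha
  have ha0 : 0 < a := norm_pos_iff.mpr hvne
  refine ⟨l, p.2, q.2, hpq, (p : E), a, ha0, ?_, ?_, ?_⟩
  · -- p on the frontier (it is the apex)
    refine ⟨subset_closure ?_, apex_not_interior ha0⟩
    rw [mem_lPie_iff ha0]
    refine ⟨by simp [ha0.le], Or.inl rfl⟩
  · -- q on the frontier (it is on the arc)
    have hqa : ‖(q : E) - (p : E)‖ = a := rfl
    refine ⟨subset_closure ?_, not_interior_of_dist_eq ha0 hqa⟩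
    rw [mem_lPie_iff ha0]
    exact ⟨le_of_eq hqa, Or.inr ⟨θ, hθ1, le_of_lt hθ2, by rw [hqa]; exact hdir⟩⟩
  · -- the pie is empty
    intro r hr hrint
    have hrS := interior_subset hrint
    rw [mem_lPie_iff ha0] at hrS
    obtain ⟨hble, hcase⟩ := hrS
    by_cases hrp : r = (p : E)
    · rw [hrp] at hrint
      exact apex_not_interior ha0 hrint
    by_cases hba : ‖r - (p : E)‖ = a
    · exact not_interior_of_dist_eq ha0 hba hrint
    -- now r is strictly inside: derive contradiction with the lens property
    rcases hcase with h | ⟨θr, hθr1, hθr2, hrdir⟩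
    · exact hrp h
    set b : ℝ := ‖r - (p : E)‖ with hb
    have hb0 : 0 < b := norm_pos_iff.mpr (sub_ne_zero.mpr hrp)
    have hblt : b < a := lt_of_le_of_ne hble hba
    -- inner product bound
    have hwidth : hi l - lo l = π/3 := by rw [hi, lo]; ring
    have hπ := Real.pi_pos
    have habs : |θ - θr| ≤ π/3 := by
      rw [abs_le]
      constructor <;> linarith
    have hcosge : (1:ℝ)/2 ≤ Real.cos (θ - θr) := by
      have h1 : Real.cos (π/3) ≤ Real.cos |θ - θr| :=
        Real.cos_le_cos_of_nonneg_of_le_pi (abs_nonneg _) (by linarith) habs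
      rw [Real.cos_pi_div_three] at h1
      rwa [Real.cos_abs] at h1
    have hinner : a * b / 2 ≤ ⟪v, r - (p : E)⟫ := by
      have : ⟪v, r - (p : E)⟫ = a * b * Real.cos (θ - θr) := by
        rw [hdir, hrdir, real_inner_smul_left, real_inner_smul_right,
          inner_dir_dir]
        ring
      rw [this]
      nlinarith [mul_le_mul_of_nonneg_left hcosge (mul_nonneg ha0.le hb0.le)]
    have hqr : ‖(q : E) - r‖^2 = a^2 - 2 * ⟪v, r - (p : E)⟫ + b^2 := by
      have hsub : (q : E) - r = v - (r - (p : E)) := by rw [hv]; abel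
      rw [hsub, @norm_sub_sq_real]
    have hqrlt : ‖(q : E) - r‖ < a := by
      nlinarith [norm_nonneg ((q : E) - r)]
    -- apply the lens property
    refine emst_lens P T hT p q ⟨r, hr⟩ hadj ?_ ?_
    · show ‖(p : E) - r‖ < ‖(p : E) - (q : E)‖
      rw [norm_sub_rev, norm_sub_rev (p : E)]
      exact hblt
    · show ‖(q : E) - r‖ < ‖(p : E) - (q : E)‖
      rw [norm_sub_rev (p : E)]
      exact hqrlt

end Main


/-- every edge of a Euclidean minimum spanning tree of `P` is an edge of
the Pie Delaunay graph `PDG(P)`. -/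
theorem emst_edge_mem_pieDelaunayGraph (P : Finset E) (hP : 2 ≤ P.card)
    (T : SimpleGraph {x // x ∈ P}) (hT : IsEMST P T)
    (p q : {x // x ∈ P}) (hadj : T.Adj p q) : PDG P (p : E) (q : E) := by
  exact emst_edge_mem_pieDelaunayGraph' P hP T hT p q hadj
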